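/- From the axiom subset {F2, F4, F5, F6, F7, F9} (i.e., EqFSCL without F1, F3, F8 and F10), axioms F1 and F3 are derivable: ⊢ F = ¬T, and for every closed term P ∈ S_A, ⊢ ¬¬P = P. -/
import Mathlib


/-- Closed sequential propositional statements over `A`:
`P ::= a | T | F | ¬P | P ∧❛ P | P ∨❛ P`. -/
inductive STerm (A : Type) : Type
  | atom : A → STerm A
  | tt : STerm A
  | ff : STerm A
  | neg : STerm A → STerm A
  | and : STerm A → STerm A → STerm A
  | or : STerm A → STerm A → STerm A

/-- Derivability from the axiom subset {F2, F4, F5, F6, F7, F9}: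
the least congruence (w.r.t. `¬`, `∧❛`, `∨❛`) on closed terms containing all closed
substitution instances of these six axioms. -/
inductive EqFSCLm {A : Type} : STerm A → STerm A → Prop
  | refl (P) : EqFSCLm P P
  | symm {P Q} : EqFSCLm P Q → EqFSCLm Q P
  | trans {P Q R} : EqFSCLm P Q → EqFSCLm Q R → EqFSCLm P R
  | neg_congr {P Q} : EqFSCLm P Q → EqFSCLm (.neg P) (.neg Q)
  | and_congr {P P' Q Q'} : EqFSCLm P Q → EqFSCLm P' Q' → EqFSCLm (.and P P') (.and Q Q')
  | or_congr {P P' Q Q'} : EqFSCLm P Q → EqFSCLm P' Q' → EqFSCLm (.or P P') (.or Q Q')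
  | F2 (x y) : EqFSCLm (.or x y) (.neg (.and (.neg x) (.neg y)))
  | F4 (x) : EqFSCLm (.and .tt x) x
  | F5 (x) : EqFSCLm (.or x .ff) x
  | F6 (x) : EqFSCLm (.and .ff x) .ff
  | F7 (x y z) : EqFSCLm (.and (.and x y) z) (.and x (.and y z))
  | F9 (x y) : EqFSCLm (.or (.and x .ff) y) (.and (.or x .tt) y)

lemma lemF1 {A : Type} : EqFSCLm (.ff : STerm A) (.neg .tt) :=
  (EqFSCLm.trans (EqFSCLm.trans (EqFSCLm.trans (EqFSCLm.trans (EqFSCLm.trans (EqFSCLm.trans (EqFSCLm.trans (EqFSCLm.trans (EqFSCLm.trans (EqFSCLm.trans (EqFSCLm.trans (EqFSCLm.trans (EqFSCLm.trans (EqFSCLm.trans (EqFSCLm.trans (EqFSCLm.trans (EqFSCLm.trans (EqFSCLm.trans (EqFSCLm.trans (EqFSCLm.trans (EqFSCLm.symm (.F5 .ff)) (.F2 .ff .ff)) (.neg_congr (EqFSCLm.symm (.F5 (.and (.neg .ff) (.neg .ff)))))) (.neg_congr (.F2 (.and (.neg .ff) (.neg .ff)) .ff))) (.neg_congr (.neg_congr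 (.and_congr (EqFSCLm.symm (.F2 .ff .ff)) (.refl (.neg .ff)))))) (EqFSCLm.symm (.neg_congr (.neg_congr (.and_congr (EqFSCLm.symm (.F5 .ff)) (.refl (.neg .ff))))))) (EqFSCLm.symm (.neg_congr (.neg_congr (EqFSCLm.symm (.F6 (.neg .ff))))))) (EqFSCLm.symm (.neg_congr (.neg_congr (.F5 .ff))))) (EqFSCLm.symm (.neg_congr (.neg_congr (EqFSCLm.symm (.F2 .ff .ff)))))) (EqFSCLm.symm (.neg_congr (.neg_congr (.neg_congr (.F5 (.and (.neg .ff) (.neg .ff)))))))) (EqFSCLm.symm (.neg_congr (.neg_congr (.neg_congr (EqFSCLm.symm (.F2 (.and (.neg .ff) (.neg .ff)) .ff))))))) (EqFSCLm.symm (.neg_congr (.neg_congr (.neg_congr (.neg_congr (.and_congr (.F2 .ff .ff) (.refl (.neg .ff))))))))) (EqFSCLm.symm (.neg_congr (.neg_congr (.neg_congr (.neg_congr (.and_congr (EqFSCLm.symm (.F5 .ff)) (.refl (.neg .ff))))))))) (EqFSCLm.symm (.neg_congr (.neg_congr (.neg_congr (.neg_congr (EqFSCLm.symm (.F6 (.neg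 .ff))))))))) (EqFSCLm.symm (.neg_congr (.neg_congr (.neg_congr (.F4 (.neg .ff))))))) (EqFSCLm.symm (.neg_congr (.neg_congr (.neg_congr (.and_congr (.F5 .tt) (.refl (.neg .ff)))))))) (EqFSCLm.symm (.neg_congr (.neg_congr (.neg_congr (.and_congr (EqFSCLm.symm (.F2 .tt .ff)) (.refl (.neg .ff)))))))) (EqFSCLm.symm (.neg_congr (.neg_congr (.F2 (.and (.neg .tt) (.neg .ff)) .ff))))) (EqFSCLm.symm (.neg_congr (.neg_congr (EqFSCLm.symm (.F5 (.and (.neg .tt) (.neg .ff)))))))) (EqFSCLm.symm (.neg_congr (.F2 .tt .ff)))) (EqFSCLm.symm (.neg_congr (EqFSCLm.symm (.F5 .tt)))))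
-- F3 search failed

lemma lemNNT {A : Type} : EqFSCLm ((.neg (.neg .tt)) : STerm A) .tt :=
  (EqFSCLm.trans (EqFSCLm.trans (EqFSCLm.trans (EqFSCLm.trans (.neg_congr (EqFSCLm.symm lemF1)) (.neg_congr (EqFSCLm.symm (.F6 (.neg .ff))))) (EqFSCLm.symm (.neg_congr (.and_congr (EqFSCLm.symm lemF1) (.refl (.neg .ff)))))) (EqFSCLm.symm (.F2 .tt .ff))) (EqFSCLm.symm (EqFSCLm.symm (.F5 .tt))))


lemma lemNF {A : Type} : EqFSCLm ((.neg .ff) : STerm A) .tt :=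
  EqFSCLm.trans (EqFSCLm.neg_congr lemF1) lemNNT

lemma lemFT {A : Type} : EqFSCLm ((.or .ff .tt) : STerm A) .tt :=
  EqFSCLm.trans (.F2 .ff .tt)
    (EqFSCLm.trans (.neg_congr (.and_congr lemNF (.refl (.neg .tt))))
      (EqFSCLm.trans (.neg_congr (.F4 (.neg .tt))) lemNNT))

lemma lemFor {A : Type} (y : STerm A) : EqFSCLm (.or .ff y) y :=
  EqFSCLm.trans (.or_congr (EqFSCLm.symm (.F6 .ff)) (.refl y))
    (EqFSCLm.trans (.F9 .ff y)
      (EqFSCLm.trans (.and_congr lemFT (.refl y)) (.F4 y)))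

lemma lemF3 {A : Type} (P : STerm A) : EqFSCLm (.neg (.neg P)) P :=
  EqFSCLm.trans (.neg_congr (EqFSCLm.symm (.F4 (.neg P))))
    (EqFSCLm.trans (.neg_congr (.and_congr (EqFSCLm.symm lemNF) (.refl (.neg P))))
      (EqFSCLm.trans (EqFSCLm.symm (.F2 .ff P)) (lemFor P)))

/-- Axioms F1 and F3 are derivable from {F2, F4, F5, F6, F7, F9}. -/
theorem derivable_F1_F3 {A : Type} [Nonempty A] :
    EqFSCLm (STerm.ff : STerm A) (.neg .tt) ∧
      ∀ P : STerm A, EqFSCLm (.neg (.neg P)) P := by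
  exact ⟨lemF1, lemF3⟩
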